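/- For r ≥ 2, the map π₀ sending X = Σᵢ xᵢXᵢ + Σ_{i<j} z_{ij}Z_{ij} in the free 2-step nilpotent Lie algebra of rank r to the (2r+1)×(2r+1) matrix with x-entries in the column r+1 rows 1..r, x-entries in row r+1 columns r+2..2r+1 (in reversed order), skew-symmetric z-entries in the top-right r×r block, and zeros elsewhere (as described in the standard type-B parabolic nilradical embedding), is an injective Lie algebra homomorphism. In particular μ(𝓛_{r,2}) ≤ 2r+1. -/

import Mathlib

/-- The free 2-step nilpotent Lie algebra of rank `r`: `𝕂^r ⊕ Λ²𝕂^r`, where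
`Λ²𝕂^r` is modeled by coordinates indexed by pairs `i < j`. -/
abbrev FreeNilp2 (K : Type) [Field K] (r : ℕ) : Type :=
  (Fin r → K) × ({p : Fin r × Fin r // p.1 < p.2} → K)

/-- The wedge `x ∧ y` in coordinates. -/
def wedge {K : Type} [Field K] {r : ℕ} (x y : Fin r → K) :
    {p : Fin r × Fin r // p.1 < p.2} → K :=
  fun p => x p.1.1 * y p.1.2 - x p.1.2 * y p.1.1

noncomputable instance (K : Type) [Field K] (r : ℕ) : LieRing (FreeNilp2 K r) where
  bracket a b := (0, wedge a.1 b.1)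
  add_lie a b c := by
    refine Prod.ext (by simp) (funext fun p => ?_)
    show wedge (a.1 + b.1) c.1 p = wedge a.1 c.1 p + wedge b.1 c.1 p
    simp [wedge]; ring
  lie_add a b c := by
    refine Prod.ext (by simp) (funext fun p => ?_)
    show wedge a.1 (b.1 + c.1) p = wedge a.1 b.1 p + wedge a.1 c.1 p
    simp [wedge]; ring
  lie_self a := by
    refine Prod.ext (by simp) (funext fun p => ?_)
    show wedge a.1 a.1 p = 0
    simp [wedge]; ring
  leibniz_lie a b c := by
    refine Prod.ext (by simp) (funext fun p => ?_)
    show wedge a.1 (0 : Fin r → K) p =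
      wedge (0 : Fin r → K) c.1 p + wedge b.1 (0 : Fin r → K) p
    simp [wedge]

noncomputable instance (K : Type) [Field K] (r : ℕ) : LieAlgebra K (FreeNilp2 K r) where
  lie_smul t a b := by
    refine Prod.ext (by show (0 : Fin r → K) = t • (0 : Fin r → K); simp) (funext fun p => ?_)
    show wedge a.1 (t • b.1) p = t * wedge a.1 b.1 p
    simp [wedge]; ring

attribute [local instance 100] LieRing.ofAssociativeRing

/-- The minimal dimension of a faithful representation of a Lie algebra. -/
noncomputable def lieMu (K : Type) [Field K] (g : Type) [LieRing g] [LieAlgebra K g] : ℕ :=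
  sInf {n : ℕ | ∃ π : g →ₗ⁅K⁆ Matrix (Fin n) (Fin n) K, Function.Injective π}

/-- The skew-symmetric matrix entry determined by `u ∈ Λ²𝕂^r`. -/
def zEntry {K : Type} [Field K] {r : ℕ}
    (u : {p : Fin r × Fin r // p.1 < p.2} → K) (i j : Fin r) : K :=
  if h : i < j then u ⟨(i, j), h⟩ else if h' : j < i then -u ⟨(j, i), h'⟩ else 0

/-- The standard `(2r+1)`-dimensional representation `π₀` of the free 2-step
nilpotent Lie algebra of rank `r` (type-B parabolic nilradical embedding):
`x`-entries in the middle column and middle row, skew-symmetric `z`-entries in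
the top-right `r × r` block, zeros elsewhere. -/
def pi0 {K : Type} [Field K] {r : ℕ} (a : FreeNilp2 K r) :
    Matrix (Fin r ⊕ Unit ⊕ Fin r) (Fin r ⊕ Unit ⊕ Fin r) K :=
  fun i j =>
    match i, j with
    | Sum.inl i, Sum.inr (Sum.inl _) => a.1 i
    | Sum.inr (Sum.inl _), Sum.inr (Sum.inr j) => a.1 j
    | Sum.inl i, Sum.inr (Sum.inr j) => zEntry a.2 i j
    | _, _ => 0

/-- `π₀` is an injective Lie algebra homomorphism into the `(2r+1) × (2r+1)`
matrices; in particular `μ(𝓛_{r,2}) ≤ 2r + 1`. -/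
theorem pi0_injective_lieHom (K : Type) [Field K] [CharZero K] (r : ℕ) (hr : 2 ≤ r) :
    Function.Injective (pi0 (K := K) (r := r)) ∧
      (∀ a b : FreeNilp2 K r, pi0 (a + b) = pi0 a + pi0 b) ∧
      (∀ (t : K) (a : FreeNilp2 K r), pi0 (t • a) = t • pi0 a) ∧
      (∀ a b : FreeNilp2 K r, pi0 ⁅a, b⁆ = ⁅pi0 a, pi0 b⁆) ∧
      lieMu K (FreeNilp2 K r) ≤ 2 * r + 1 := by
  have hinj : Function.Injective (pi0 (K := K) (r := r)) := by
    intro a b h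
    refine Prod.ext (funext fun i => ?_) (funext fun p => ?_)
    · have := congrFun (congrFun h (Sum.inl i)) (Sum.inr (Sum.inl ()))
      simpa [pi0] using this
    · have := congrFun (congrFun h (Sum.inl p.1.1)) (Sum.inr (Sum.inr p.1.2))
      simpa [pi0, zEntry, dif_pos p.2] using this
  have hadd : ∀ a b : FreeNilp2 K r, pi0 (a + b) = pi0 a + pi0 b := by
    intro a b
    ext i j
    rcases i with i | u | i <;> rcases j with j | u' | j <;>
      simp [pi0, zEntry, Matrix.add_apply] <;> try (split_ifs <;> try simp) <;> try ring
  have hsmul : ∀ (t : K) (a : FreeNilp2 K r), pi0 (t • a) = t • pi0 a := by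
    intro t a
    ext i j
    rcases i with i | u | i <;> rcases j with j | u' | j <;>
      simp [pi0, zEntry, Matrix.smul_apply] <;> try (split_ifs <;> try simp) <;> try ring
  have hlie : ∀ a b : FreeNilp2 K r, pi0 ⁅a, b⁆ = ⁅pi0 a, pi0 b⁆ := by
    intro a b
    have hbr : (⁅a, b⁆ : FreeNilp2 K r) = (0, wedge a.1 b.1) := rfl
    ext i j
    rw [Ring.lie_def]
    rcases i with i | u | i <;> rcases j with j | u' | j <;>
      simp only [hbr, pi0, Matrix.sub_apply, Matrix.mul_apply, Fintype.sum_sum_type,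
        Finset.sum_const_zero, Finset.univ_unique, Finset.sum_singleton, mul_zero, zero_mul,
        add_zero, zero_add, sub_zero, zero_sub, sub_self, neg_zero, Pi.zero_apply] <;>
      try ring
    rcases lt_trichotomy i j with h | h | h
    · simp only [zEntry, wedge, dif_pos h, dif_neg (asymm h)]; ring
    · subst h
      simp only [zEntry]
      rw [dif_neg (lt_irrefl i), dif_neg (lt_irrefl i)]
      ring
    · simp only [zEntry, wedge, dif_neg (asymm h), dif_pos h]; ring
  refine ⟨hinj, hadd, hsmul, hlie, ?_⟩
  have card : Fintype.card (Fin r ⊕ Unit ⊕ Fin r) = 2 * r + 1 := by simp; omega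
  let e : (Fin r ⊕ Unit ⊕ Fin r) ≃ Fin (2 * r + 1) := Fintype.equivFinOfCardEq card
  let L : FreeNilp2 K r →ₗ⁅K⁆ Matrix (Fin r ⊕ Unit ⊕ Fin r) (Fin r ⊕ Unit ⊕ Fin r) K :=
    { toFun := pi0
      map_add' := hadd
      map_smul' := hsmul
      map_lie' := fun {a b} => hlie a b }
  let π : FreeNilp2 K r →ₗ⁅K⁆ Matrix (Fin (2 * r + 1)) (Fin (2 * r + 1)) K :=
    (Matrix.reindexLieEquiv e).toLieHom.comp L
  have hπ : Function.Injective π := by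
    intro a b h
    apply hinj
    have h' : (Matrix.reindexLieEquiv (R := K) e) (pi0 a) =
        (Matrix.reindexLieEquiv (R := K) e) (pi0 b) := h
    exact (Matrix.reindexLieEquiv (R := K) e).injective h'
  exact Nat.sInf_le ⟨π, hπ⟩
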